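/- If y is absolutely continuous on [-1,1] with y' in L^2(-1,1) and ∫_{-1}^{1} y(t) dt = 0, then for every x in [-1,1], |y(x)|^2 ≤ ((1+3x^2)/6) · ∫_{-1}^{1} |y'(t)|^2 dt, and the constant (1+3x^2)/6 is sharp. -/

import Mathlib

open MeasureTheory Set

lemma my_fubB {a b : ℝ} (hab : a ≤ b) {g : ℝ → ℝ} (hg : IntegrableOn g (Ioc a b)) :
    (∫ t in a..b, ∫ s in a..t, g s) = ∫ s in a..b, (b - s) * g s := by
  set μ := volume.restrict (Ioc a b) with hμ
  haveI : IsFiniteMeasure μ := by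
    constructor
    rw [hμ, Measure.restrict_apply_univ, Real.volume_Ioc]
    exact ENNReal.ofReal_lt_top
  have hS : MeasurableSet {p : ℝ × ℝ | p.2 ≤ p.1} := measurableSet_le measurable_snd measurable_fst
  set F : ℝ → ℝ → ℝ := fun t s => ({p : ℝ × ℝ | p.2 ≤ p.1}).indicator (fun p => g p.2) (t, s)
    with hF
  have hint : Integrable (Function.uncurry F) (μ.prod μ) := by
    have h1 : Integrable (fun p : ℝ × ℝ => (1 : ℝ) * g p.2) (μ.prod μ) :=
      (integrable_const (1 : ℝ)).mul_prod hg
    simp only [one_mul] at h1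
    have h2 := h1.indicator hS
    have he : Function.uncurry F = ({p : ℝ × ℝ | p.2 ≤ p.1}).indicator (fun p => g p.2) := by
      funext p; simp [Function.uncurry, hF]
    rw [he]; exact h2
  have hswap := integral_integral_swap hint
  have hL : (∫ t in a..b, ∫ s in a..t, g s) = ∫ t, (∫ s, F t s ∂μ) ∂μ := by
    rw [intervalIntegral.integral_of_le hab, hμ]
    apply setIntegral_congr_fun measurableSet_Ioc
    intro t ht
    dsimp only
    have hta : a ≤ t := le_of_lt ht.1
    have hFt : F t = (Iic t).indicator g := by
      funext s; simp [hF, indicator, Set.mem_setOf_eq, Set.mem_Iic]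
    have hset : Iic t ∩ Ioc a b = Ioc a t := by
      ext s
      simp only [mem_inter_iff, mem_Iic, mem_Ioc]
      constructor
      · rintro ⟨h1, h2, _⟩; exact ⟨h2, h1⟩
      · rintro ⟨h1, h2⟩; exact ⟨h2, h1, h2.trans ht.2⟩
    rw [intervalIntegral.integral_of_le hta]
    rw [hFt, integral_indicator measurableSet_Iic,
      Measure.restrict_restrict measurableSet_Iic, hset]
  have hR : (∫ s, (∫ t, F t s ∂μ) ∂μ) = ∫ s in a..b, (b - s) * g s := by
    rw [intervalIntegral.integral_of_le hab, hμ]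
    apply setIntegral_congr_fun measurableSet_Ioc
    intro s hs
    dsimp only
    have hFs : (fun t => F t s) = (Ici s).indicator (fun _ => g s) := by
      funext t; simp [hF, indicator, Set.mem_setOf_eq, Set.mem_Ici]
    have hset : Ici s ∩ Ioc a b = Icc s b := by
      ext t
      simp only [mem_inter_iff, mem_Ici, mem_Ioc, mem_Icc]
      constructor
      · rintro ⟨h1, _, h3⟩; exact ⟨h1, h3⟩
      · rintro ⟨h1, h2⟩; exact ⟨h1, lt_of_lt_of_le hs.1 h1, h2⟩
    rw [hFs, integral_indicator_const _ measurableSet_Ici,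
      measureReal_def, Measure.restrict_apply measurableSet_Ici, hset, Real.volume_Icc,
      ENNReal.toReal_ofReal (by linarith [hs.2] : (0:ℝ) ≤ b - s)]
    simp
  rw [hL, hswap, hR]

lemma my_fubA {a b : ℝ} (hab : a ≤ b) {g : ℝ → ℝ} (hg : IntegrableOn g (Ioc a b)) :
    (∫ t in a..b, ∫ s in t..b, g s) = ∫ s in a..b, (s - a) * g s := by
  set μ := volume.restrict (Ioc a b) with hμ
  haveI : IsFiniteMeasure μ := by
    constructor
    rw [hμ, Measure.restrict_apply_univ, Real.volume_Ioc]
    exact ENNReal.ofReal_lt_top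
  have hS : MeasurableSet {p : ℝ × ℝ | p.1 < p.2} := measurableSet_lt measurable_fst measurable_snd
  set F : ℝ → ℝ → ℝ := fun t s => ({p : ℝ × ℝ | p.1 < p.2}).indicator (fun p => g p.2) (t, s)
    with hF
  have hint : Integrable (Function.uncurry F) (μ.prod μ) := by
    have h1 : Integrable (fun p : ℝ × ℝ => (1 : ℝ) * g p.2) (μ.prod μ) :=
      (integrable_const (1 : ℝ)).mul_prod hg
    simp only [one_mul] at h1
    have h2 := h1.indicator hS
    have he : Function.uncurry F = ({p : ℝ × ℝ | p.1 < p.2}).indicator (fun p => g p.2) := by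
      funext p; simp [Function.uncurry, hF]
    rw [he]; exact h2
  have hswap := integral_integral_swap hint
  have hL : (∫ t in a..b, ∫ s in t..b, g s) = ∫ t, (∫ s, F t s ∂μ) ∂μ := by
    rw [intervalIntegral.integral_of_le hab, hμ]
    apply setIntegral_congr_fun measurableSet_Ioc
    intro t ht
    dsimp only
    have htb : t ≤ b := ht.2
    have hFt : F t = (Ioi t).indicator g := by
      funext s; simp [hF, indicator, Set.mem_setOf_eq, Set.mem_Ioi]
    have hset : Ioi t ∩ Ioc a b = Ioc t b := by
      ext s
      simp only [mem_inter_iff, mem_Ioi, mem_Ioc]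
      constructor
      · rintro ⟨h1, _, h3⟩; exact ⟨h1, h3⟩
      · rintro ⟨h1, h2⟩; exact ⟨h1, lt_trans ht.1 h1, h2⟩
    rw [intervalIntegral.integral_of_le htb]
    rw [hFt, integral_indicator measurableSet_Ioi,
      Measure.restrict_restrict measurableSet_Ioi, hset]
  have hR : (∫ s, (∫ t, F t s ∂μ) ∂μ) = ∫ s in a..b, (s - a) * g s := by
    rw [intervalIntegral.integral_of_le hab, hμ]
    apply setIntegral_congr_fun measurableSet_Ioc
    intro s hs
    dsimp only
    have hFs : (fun t => F t s) = (Iio s).indicator (fun _ => g s) := by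
      funext t; simp [hF, indicator, Set.mem_setOf_eq, Set.mem_Iio]
    have hset : Iio s ∩ Ioc a b = Ioo a s := by
      ext t
      simp only [mem_inter_iff, mem_Iio, mem_Ioc, mem_Ioo]
      constructor
      · rintro ⟨h1, h2, _⟩; exact ⟨h2, h1⟩
      · rintro ⟨h1, h2⟩; exact ⟨h2, h1, (le_of_lt h2).trans hs.2⟩
    rw [hFs, integral_indicator_const _ measurableSet_Iio,
      measureReal_def, Measure.restrict_apply measurableSet_Iio, hset, Real.volume_Ioo,
      ENNReal.toReal_ofReal (by linarith [hs.1] : (0:ℝ) ≤ s - a)]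
    simp
  rw [hL, hswap, hR]

noncomputable def myphi (x s : ℝ) : ℝ := if s ≤ x then (s + 1) / 2 else (s - 1) / 2

lemma myphi_meas (x : ℝ) : Measurable (myphi x) :=
  Measurable.ite (measurableSet_le measurable_id measurable_const) (by fun_prop) (by fun_prop)

lemma myphi_bound {x s : ℝ} (hx : x ∈ Icc (-1:ℝ) 1) (hs : s ∈ Icc (-1:ℝ) 1) :
    |myphi x s| ≤ 1 := by
  obtain ⟨hx1, hx2⟩ := hx; obtain ⟨hs1, hs2⟩ := hs
  rw [myphi, abs_le]
  split_ifs with h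
  · constructor <;> linarith
  · constructor <;> linarith

lemma myphi_int {x : ℝ} (hx : x ∈ Icc (-1:ℝ) 1) :
    Integrable (myphi x) (volume.restrict (Ioc (-1:ℝ) 1)) := by
  refine Integrable.mono' (integrable_const 1) (myphi_meas x).aestronglyMeasurable ?_
  rw [ae_restrict_iff' measurableSet_Ioc]
  filter_upwards with s hs
  exact myphi_bound hx (Ioc_subset_Icc_self hs)

lemma myphi_sq_int {x : ℝ} (hx : x ∈ Icc (-1:ℝ) 1) :
    Integrable (fun s => myphi x s ^ 2) (volume.restrict (Ioc (-1:ℝ) 1)) := by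
  refine Integrable.mono' (integrable_const 1) (((myphi_meas x).pow_const 2).aestronglyMeasurable) ?_
  rw [ae_restrict_iff' measurableSet_Ioc]
  filter_upwards with s hs
  have := myphi_bound hx (Ioc_subset_Icc_self hs)
  rw [Real.norm_eq_abs, abs_pow]
  have h0 : |myphi x s| ^ 2 ≤ 1 ^ 2 := by
    apply pow_le_pow_left₀ (abs_nonneg _) this
  simpa using h0

lemma myphi_mul_int {x : ℝ} (hx : x ∈ Icc (-1:ℝ) 1) {g : ℝ → ℝ}
    (hg : Integrable g (volume.restrict (Ioc (-1:ℝ) 1))) :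
    Integrable (fun s => myphi x s * g s) (volume.restrict (Ioc (-1:ℝ) 1)) := by
  refine Integrable.mono' hg.norm
    ((myphi_meas x).aestronglyMeasurable.mul hg.aestronglyMeasurable) ?_
  rw [ae_restrict_iff' measurableSet_Ioc]
  filter_upwards with s hs
  rw [Real.norm_eq_abs, abs_mul]
  calc |myphi x s| * |g s| ≤ 1 * |g s| := by
        gcongr; exact myphi_bound hx (Ioc_subset_Icc_self hs)
    _ = ‖g s‖ := by rw [one_mul, Real.norm_eq_abs]

lemma my_poly_int (a b c : ℝ) : ∫ s in a..b, ((s + c) / 2) ^ 2 = ((b + c) ^ 3 - (a + c) ^ 3) / 12 := by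
  have hd : ∀ s : ℝ, HasDerivAt (fun u => (u + c) ^ 3 / 12) (((s + c) / 2) ^ 2) s := by
    intro s
    have h1 : HasDerivAt (fun u : ℝ => u + c) 1 s := (hasDerivAt_id s).add_const c
    have h2 : HasDerivAt (fun u => (u + c) ^ 3 / 12) (((3:ℕ):ℝ) * (s + c) ^ (3 - 1) * 1 / 12) s :=
      (h1.pow 3).div_const 12
    convert h2 using 1
    ring
  rw [intervalIntegral.integral_eq_sub_of_hasDerivAt (fun s _ => hd s)
    (Continuous.intervalIntegrable (by fun_prop) a b)]
  ring

lemma my_phi_sq_integral {x : ℝ} (hx : x ∈ Icc (-1:ℝ) 1) :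
    (∫ s in (-1:ℝ)..1, myphi x s ^ 2) = (1 + 3 * x ^ 2) / 6 := by
  obtain ⟨hx1, hx2⟩ := hx
  have hII : IntervalIntegrable (fun s => myphi x s ^ 2) volume (-1) 1 :=
    (intervalIntegrable_iff_integrableOn_Ioc_of_le (by norm_num)).2 (myphi_sq_int ⟨hx1, hx2⟩)
  have hsub1 : IntervalIntegrable (fun s => myphi x s ^ 2) volume (-1) x := by
    apply hII.mono_set
    rw [uIcc_of_le hx1, uIcc_of_le (by norm_num : (-1:ℝ) ≤ 1)]
    exact Icc_subset_Icc le_rfl hx2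
  have hsub2 : IntervalIntegrable (fun s => myphi x s ^ 2) volume x 1 := by
    apply hII.mono_set
    rw [uIcc_of_le hx2, uIcc_of_le (by norm_num : (-1:ℝ) ≤ 1)]
    exact Icc_subset_Icc hx1 le_rfl
  rw [← intervalIntegral.integral_add_adjacent_intervals hsub1 hsub2]
  have e1 : (∫ s in (-1:ℝ)..x, myphi x s ^ 2) = ∫ s in (-1:ℝ)..x, ((s + 1) / 2) ^ 2 := by
    apply intervalIntegral.integral_congr
    intro s hs
    rw [uIcc_of_le hx1] at hs
    simp only [myphi, if_pos hs.2]
  have e2 : (∫ s in x..(1:ℝ), myphi x s ^ 2) = ∫ s in x..(1:ℝ), ((s + -1) / 2) ^ 2 := by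
    rw [intervalIntegral.integral_of_le hx2, intervalIntegral.integral_of_le hx2]
    apply setIntegral_congr_fun measurableSet_Ioc
    intro s hs
    simp only [myphi, if_neg (not_le.2 hs.1)]
    ring
  rw [e1, e2, my_poly_int, my_poly_int]
  ring

lemma my_repr {x : ℝ} (hx : x ∈ Icc (-1:ℝ) 1) {g : ℝ → ℝ}
    (hg : IntervalIntegrable g volume (-1) 1) :
    (∫ s in (-1:ℝ)..x, g s) - (1 / 2) * (∫ t in (-1:ℝ)..1, (∫ s in (-1:ℝ)..t, g s))
      = ∫ s in (-1:ℝ)..1, myphi x s * g s := by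
  obtain ⟨hx1, hx2⟩ := hx
  have huIcc : uIcc (-1:ℝ) 1 = Icc (-1:ℝ) 1 := uIcc_of_le (by norm_num)
  have hgx : IntervalIntegrable g volume (-1) x := by
    apply hg.mono_set
    rw [uIcc_of_le hx1, huIcc]; exact Icc_subset_Icc le_rfl hx2
  have hgx1 : IntervalIntegrable g volume x 1 := by
    apply hg.mono_set
    rw [uIcc_of_le hx2, huIcc]; exact Icc_subset_Icc hx1 le_rfl
  set G : ℝ → ℝ := fun t => ∫ s in (-1:ℝ)..t, g s with hG
  have hGcont : ContinuousOn G (Icc (-1:ℝ) 1) := by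
    rw [← huIcc]
    exact intervalIntegral.continuousOn_primitive_interval' hg (by rw [huIcc]; exact ⟨le_refl _, by norm_num⟩)
  have hGII : IntervalIntegrable G volume (-1) 1 :=
    ContinuousOn.intervalIntegrable (by rw [huIcc]; exact hGcont)
  have hDII : IntervalIntegrable (fun t => G x - G t) volume (-1) 1 :=
    (intervalIntegrable_const).sub hGII
  have hD1 : IntervalIntegrable (fun t => G x - G t) volume (-1) x := by
    apply hDII.mono_set
    rw [uIcc_of_le hx1, huIcc]; exact Icc_subset_Icc le_rfl hx2
  have hD2 : IntervalIntegrable (fun t => G x - G t) volume x 1 := by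
    apply hDII.mono_set
    rw [uIcc_of_le hx2, huIcc]; exact Icc_subset_Icc hx1 le_rfl
  -- LHS = (1/2) ∫ (G x - G t)
  have step1 : (∫ t in (-1:ℝ)..1, (G x - G t))
      = 2 * G x - ∫ t in (-1:ℝ)..1, G t := by
    rw [intervalIntegral.integral_sub intervalIntegrable_const hGII,
      intervalIntegral.integral_const]
    norm_num
  -- split
  have step2 : (∫ t in (-1:ℝ)..1, (G x - G t))
      = (∫ t in (-1:ℝ)..x, (G x - G t)) + ∫ t in x..1, (G x - G t) :=
    (intervalIntegral.integral_add_adjacent_intervals hD1 hD2).symm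
  -- piece 1
  have piece1 : (∫ t in (-1:ℝ)..x, (G x - G t)) = ∫ s in (-1:ℝ)..x, (s + 1) * g s := by
    have c1 : (∫ t in (-1:ℝ)..x, (G x - G t)) = ∫ t in (-1:ℝ)..x, (∫ s in t..x, g s) := by
      apply intervalIntegral.integral_congr
      intro t ht
      rw [uIcc_of_le hx1] at ht
      have hgt : IntervalIntegrable g volume (-1) t := by
        apply hg.mono_set
        rw [uIcc_of_le ht.1, huIcc]; exact Icc_subset_Icc le_rfl (ht.2.trans hx2)
      exact (intervalIntegral.integral_interval_sub_left hgx hgt)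
    rw [c1, my_fubA hx1 ((intervalIntegrable_iff_integrableOn_Ioc_of_le hx1).1 hgx)]
    apply intervalIntegral.integral_congr
    intro s _
    ring
  -- piece 2
  have piece2 : (∫ t in x..1, (G x - G t)) = - ∫ s in x..1, (1 - s) * g s := by
    have c1 : (∫ t in x..1, (G x - G t)) = ∫ t in x..1, -(∫ s in x..t, g s) := by
      apply intervalIntegral.integral_congr
      intro t ht
      rw [uIcc_of_le hx2] at ht
      have hgt : IntervalIntegrable g volume (-1) t := by
        apply hg.mono_set
        rw [uIcc_of_le (hx1.trans ht.1), huIcc]; exact Icc_subset_Icc le_rfl ht.2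
      have := intervalIntegral.integral_interval_sub_left hgt hgx
      dsimp only
      rw [← this]
      ring
    rw [c1, intervalIntegral.integral_neg, my_fubB hx2
      ((intervalIntegrable_iff_integrableOn_Ioc_of_le hx2).1 hgx1)]
  -- RHS decomposition
  have hmu : Integrable g (volume.restrict (Ioc (-1:ℝ) 1)) :=
    (intervalIntegrable_iff_integrableOn_Ioc_of_le (by norm_num)).1 hg
  have hphig : IntervalIntegrable (fun s => myphi x s * g s) volume (-1) 1 :=
    (intervalIntegrable_iff_integrableOn_Ioc_of_le (by norm_num)).2
      (myphi_mul_int ⟨hx1, hx2⟩ hmu)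
  have hphig1 : IntervalIntegrable (fun s => myphi x s * g s) volume (-1) x := by
    apply hphig.mono_set
    rw [uIcc_of_le hx1, huIcc]; exact Icc_subset_Icc le_rfl hx2
  have hphig2 : IntervalIntegrable (fun s => myphi x s * g s) volume x 1 := by
    apply hphig.mono_set
    rw [uIcc_of_le hx2, huIcc]; exact Icc_subset_Icc hx1 le_rfl
  have rhs_split : (∫ s in (-1:ℝ)..1, myphi x s * g s)
      = (∫ s in (-1:ℝ)..x, myphi x s * g s) + ∫ s in x..1, myphi x s * g s :=
    (intervalIntegral.integral_add_adjacent_intervals hphig1 hphig2).symm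
  have r1 : (∫ s in (-1:ℝ)..x, myphi x s * g s)
      = (1 / 2) * ∫ s in (-1:ℝ)..x, (s + 1) * g s := by
    rw [← intervalIntegral.integral_const_mul]
    apply intervalIntegral.integral_congr
    intro s hs
    rw [uIcc_of_le hx1] at hs
    simp only [myphi, if_pos hs.2]
    ring
  have r2 : (∫ s in x..1, myphi x s * g s)
      = -(1 / 2) * ∫ s in x..1, (1 - s) * g s := by
    rw [← intervalIntegral.integral_const_mul]
    rw [intervalIntegral.integral_of_le hx2, intervalIntegral.integral_of_le hx2]
    apply setIntegral_congr_fun measurableSet_Ioc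
    intro s hs
    simp only [myphi, if_neg (not_le.2 hs.1)]
    ring
  -- combine
  have hGx : G x = ∫ s in (-1:ℝ)..x, g s := rfl
  rw [rhs_split, r1, r2, ← hGx]
  have : (∫ t in (-1:ℝ)..1, G t) = 2 * G x - ((∫ s in (-1:ℝ)..x, (s + 1) * g s) + - ∫ s in x..1, (1 - s) * g s) := by
    rw [← piece1, ← piece2, ← step2, step1]
    ring
  rw [this]
  ring

lemma my_cs {μ : Measure ℝ} {f g : ℝ → ℝ}
    (hf2 : Integrable (fun s => f s ^ 2) μ) (hg2 : Integrable (fun s => g s ^ 2) μ)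
    (hfg : Integrable (fun s => f s * g s) μ) :
    (∫ s, f s * g s ∂μ) ^ 2 ≤ (∫ s, f s ^ 2 ∂μ) * ∫ s, g s ^ 2 ∂μ := by
  set A := ∫ s, f s ^ 2 ∂μ with hA
  set B := ∫ s, f s * g s ∂μ with hB
  set C := ∫ s, g s ^ 2 ∂μ with hC
  have key : ∀ t : ℝ, 0 ≤ A * (t * t) + (2 * B) * t + C := by
    intro t
    have e0 : (∫ s, (t * f s + g s) ^ 2 ∂μ)
        = ∫ s, (t ^ 2 * f s ^ 2 + 2 * t * (f s * g s)) + g s ^ 2 ∂μ := by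
      congr 1; funext s; ring
    have e1 : (∫ s, (t ^ 2 * f s ^ 2 + 2 * t * (f s * g s)) + g s ^ 2 ∂μ)
        = (∫ s, t ^ 2 * f s ^ 2 + 2 * t * (f s * g s) ∂μ) + C :=
      integral_add ((hf2.const_mul (t ^ 2)).add (hfg.const_mul (2 * t))) hg2
    have e2 : (∫ s, t ^ 2 * f s ^ 2 + 2 * t * (f s * g s) ∂μ)
        = (∫ s, t ^ 2 * f s ^ 2 ∂μ) + ∫ s, 2 * t * (f s * g s) ∂μ :=
      integral_add (hf2.const_mul (t ^ 2)) (hfg.const_mul (2 * t))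
    have e3 : (∫ s, t ^ 2 * f s ^ 2 ∂μ) = t ^ 2 * A := integral_const_mul _ _
    have e4 : (∫ s, 2 * t * (f s * g s) ∂μ) = 2 * t * B := integral_const_mul _ _
    have h0 : 0 ≤ ∫ s, (t * f s + g s) ^ 2 ∂μ := integral_nonneg fun s => sq_nonneg _
    rw [e0, e1, e2, e3, e4] at h0
    nlinarith [h0]
  have hd := discrim_le_zero key
  rw [discrim] at hd
  nlinarith [hd]

lemma my_primitive_II {g : ℝ → ℝ} (hg : IntervalIntegrable g volume (-1) 1) :
    IntervalIntegrable (fun t => ∫ s in (-1:ℝ)..t, g s) volume (-1) 1 := by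
  have huIcc : uIcc (-1:ℝ) 1 = Icc (-1:ℝ) 1 := uIcc_of_le (by norm_num)
  apply ContinuousOn.intervalIntegrable
  exact intervalIntegral.continuousOn_primitive_interval' hg
    (by rw [huIcc]; exact ⟨le_refl _, by norm_num⟩)

/-- `W12 y g` : `y` is absolutely continuous on `[-1,1]` with derivative `g ∈ L²(-1,1)`. -/
def W12 (y g : ℝ → ℝ) : Prop :=
  IntervalIntegrable g MeasureTheory.volume (-1) 1 ∧
  IntervalIntegrable (fun t => g t ^ 2) MeasureTheory.volume (-1) 1 ∧
  ∀ t ∈ Set.Icc (-1 : ℝ) 1, y t = y (-1) + ∫ s in (-1 : ℝ)..t, g s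

theorem poincare_m1 :
    (∀ y g : ℝ → ℝ, W12 y g → (∫ t in (-1:ℝ)..1, y t) = 0 →
      ∀ x ∈ Set.Icc (-1:ℝ) 1,
        (y x) ^ 2 ≤ (1 + 3 * x ^ 2) / 6 * ∫ t in (-1:ℝ)..1, (g t) ^ 2) ∧
    (∀ x ∈ Set.Icc (-1:ℝ) 1, ∀ B : ℝ,
      (∀ y g : ℝ → ℝ, W12 y g → (∫ t in (-1:ℝ)..1, y t) = 0 →
        (y x) ^ 2 ≤ B * ∫ t in (-1:ℝ)..1, (g t) ^ 2) →
      (1 + 3 * x ^ 2) / 6 ≤ B) := by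
  have hm11 : (-1:ℝ) ≤ 1 := by norm_num
  have huIcc : uIcc (-1:ℝ) 1 = Icc (-1:ℝ) 1 := uIcc_of_le hm11
  constructor
  · -- the inequality
    rintro y g ⟨hg, hg2, hrep⟩ hmean x hx
    set G : ℝ → ℝ := fun t => ∫ s in (-1:ℝ)..t, g s with hGdef
    have hGII : IntervalIntegrable G volume (-1) 1 := my_primitive_II hg
    have hmean2 : 2 * y (-1) + (∫ t in (-1:ℝ)..1, G t) = 0 := by
      have e : (∫ t in (-1:ℝ)..1, y t) = ∫ t in (-1:ℝ)..1, (y (-1) + G t) := by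
        apply intervalIntegral.integral_congr
        intro t ht
        rw [huIcc] at ht
        exact hrep t ht
      rw [e, intervalIntegral.integral_add intervalIntegrable_const hGII,
        intervalIntegral.integral_const] at hmean
      rw [← hmean]
      norm_num
    have hyx : y x = (∫ s in (-1:ℝ)..x, g s)
        - (1 / 2) * ∫ t in (-1:ℝ)..1, (∫ s in (-1:ℝ)..t, g s) := by
      have h1 : y x = y (-1) + G x := hrep x hx
      have h2 : G x = ∫ s in (-1:ℝ)..x, g s := rfl
      rw [h1, h2]
      have h3 : (∫ t in (-1:ℝ)..1, (∫ s in (-1:ℝ)..t, g s)) = ∫ t in (-1:ℝ)..1, G t := rfl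
      rw [h3]
      linarith
    rw [my_repr hx hg] at hyx
    have hmu_g : Integrable g (volume.restrict (Ioc (-1:ℝ) 1)) :=
      (intervalIntegrable_iff_integrableOn_Ioc_of_le hm11).1 hg
    have hmu_g2 : Integrable (fun s => g s ^ 2) (volume.restrict (Ioc (-1:ℝ) 1)) :=
      (intervalIntegrable_iff_integrableOn_Ioc_of_le hm11).1 hg2
    have hcs := my_cs (myphi_sq_int hx) hmu_g2 (myphi_mul_int hx hmu_g)
    have e1 : (∫ s, myphi x s * g s ∂(volume.restrict (Ioc (-1:ℝ) 1)))
        = ∫ s in (-1:ℝ)..1, myphi x s * g s := (intervalIntegral.integral_of_le hm11).symm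
    have e2 : (∫ s, myphi x s ^ 2 ∂(volume.restrict (Ioc (-1:ℝ) 1)))
        = (1 + 3 * x ^ 2) / 6 := by
      rw [← my_phi_sq_integral hx, intervalIntegral.integral_of_le hm11]
    have e3 : (∫ s, g s ^ 2 ∂(volume.restrict (Ioc (-1:ℝ) 1)))
        = ∫ t in (-1:ℝ)..1, g t ^ 2 := (intervalIntegral.integral_of_le hm11).symm
    rw [e1, e2, e3] at hcs
    rw [hyx]
    exact hcs
  · -- sharpness
    intro x hx B hB
    set g : ℝ → ℝ := myphi x with hgdef
    have hgI : IntervalIntegrable g volume (-1) 1 :=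
      (intervalIntegrable_iff_integrableOn_Ioc_of_le hm11).2 (myphi_int hx)
    have hg2I : IntervalIntegrable (fun t => g t ^ 2) volume (-1) 1 :=
      (intervalIntegrable_iff_integrableOn_Ioc_of_le hm11).2 (myphi_sq_int hx)
    set G : ℝ → ℝ := fun t => ∫ s in (-1:ℝ)..t, g s with hGdef
    have hGII : IntervalIntegrable G volume (-1) 1 := my_primitive_II hgI
    set c : ℝ := (1 / 2) * ∫ t in (-1:ℝ)..1, G t with hcdef
    set y : ℝ → ℝ := fun t => G t - c with hydef
    have hW : W12 y g := by
      refine ⟨hgI, hg2I, fun t _ => ?_⟩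
      show G t - c = (G (-1) - c) + ∫ s in (-1:ℝ)..t, g s
      have : G (-1) = 0 := intervalIntegral.integral_same
      rw [this]
      have : (∫ s in (-1:ℝ)..t, g s) = G t := rfl
      rw [this]
      ring
    have hmean : (∫ t in (-1:ℝ)..1, y t) = 0 := by
      show (∫ t in (-1:ℝ)..1, (G t - c)) = 0
      rw [intervalIntegral.integral_sub hGII intervalIntegrable_const,
        intervalIntegral.integral_const, hcdef]
      norm_num
      ring
    have hineq := hB y g hW hmean
    set C : ℝ := (1 + 3 * x ^ 2) / 6 with hCdef
    have hyx : y x = C := by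
      show G x - c = C
      have h2 : G x = ∫ s in (-1:ℝ)..x, g s := rfl
      rw [hcdef, h2]
      have h3 : (∫ t in (-1:ℝ)..1, G t) = ∫ t in (-1:ℝ)..1, (∫ s in (-1:ℝ)..t, g s) := rfl
      rw [h3, my_repr hx hgI]
      have h4 : (∫ s in (-1:ℝ)..1, myphi x s * g s) = ∫ s in (-1:ℝ)..1, myphi x s ^ 2 := by
        apply intervalIntegral.integral_congr
        intro s _
        simp [hgdef, sq]
      rw [h4, my_phi_sq_integral hx]
    have hg2v : (∫ t in (-1:ℝ)..1, g t ^ 2) = C := my_phi_sq_integral hx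
    rw [hyx, hg2v] at hineq
    have hCpos : 0 < C := by
      rw [hCdef]
      positivity
    nlinarith [hineq, hCpos]
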